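/- Let d ≥ 1 be an integer and γ ∈ (1/2,(d+2)/4). The following are equivalent: (i) γ = (d+3)/6; (ii) for every ξ ∈ ℝ^d \ {0} and every bounded continuous k : (0,∞) → ℝ, ∫_{ℝ^d} k(|η|/|ξ|) H(η|ξ) dη = ∫_{ℝ^d} k(|ξ|/|η|) H(η|ξ) dη. That is, the ratio R = |η|/|ξ| under the law H(·|ξ) is symmetrically distributed on the multiplicative group (0,∞) (has the same distribution as 1/R) if and only if γ = (d+3)/6. -/

import Mathlib

open MeasureTheory Set

/-- The constant `c_{d,γ}` of the standard majorizing kernel. -/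
noncomputable def cdg (d : ℕ) (γ : ℝ) : ℝ :=
  Real.pi ^ (-(d : ℝ)/2) * Real.Gamma (2*γ - 1) * (Real.Gamma (((d : ℝ) + 1 - 2*γ)/2))^2 /
    (Real.Gamma (((d : ℝ) + 2 - 4*γ)/2) * (Real.Gamma ((2*γ - 1)/2))^2)

/-- `H(η|ξ) = c_{d,γ} |η|^{2γ−d−1} |ξ−η|^{2γ−d−1} |ξ|^{d+2−4γ}`. -/
noncomputable def Hker (d : ℕ) (γ : ℝ) (η ξ : EuclideanSpace ℝ (Fin d)) : ℝ :=
  cdg d γ * ‖η‖ ^ (2*γ - (d : ℝ) - 1) * ‖ξ - η‖ ^ (2*γ - (d : ℝ) - 1)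
    * ‖ξ‖ ^ ((d : ℝ) + 2 - 4*γ)

namespace Stmt5Aux

open EuclideanGeometry Module

variable {d : ℕ}

local notation "E" => EuclideanSpace ℝ (Fin d)

lemma cov (hd : 1 ≤ d) {r : ℝ} (hr : 0 < r) (g : E → ℝ) :
    ∫ x : E, g x = ∫ x : E, ((r/‖x‖)^2)^d * g (((r/‖x‖)^2) • x) := by
  have : Nonempty (Fin d) := ⟨⟨0, hd⟩⟩
  set s : Set E := {0}ᶜ with hs
  have hms : MeasurableSet s := (measurableSet_singleton 0).compl
  set T : E → E := inversion (0:E) r with hT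
  have hTx : ∀ x : E, T x = ((r/‖x‖)^2) • x := by
    intro x
    simp [hT, inversion, dist_zero_right]
  have hTne : ∀ x : E, x ≠ 0 → T x ≠ 0 := by
    intro x hx
    rw [hTx]
    exact smul_ne_zero (pow_ne_zero _ (div_ne_zero hr.ne' (norm_ne_zero_iff.mpr hx))) hx
  have hinv : ∀ x : E, T (T x) = x := inversion_inversion 0 hr.ne'
  have hinj : Set.InjOn T s := fun x _ y _ h => by
    have := hinv x; rw [h, hinv] at this; exact this.symm
  have himg : T '' s = s := by
    apply Set.Subset.antisymm
    · rintro _ ⟨x, hx, rfl⟩; exact hTne x hx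
    · intro y hy; exact ⟨T y, hTne y hy, hinv y⟩
  have hf' : ∀ x ∈ s, HasFDerivWithinAt T
      ((r / dist x (0:E)) ^ 2 • ((ℝ ∙ (x - 0))ᗮ.reflection : E →L[ℝ] E)) s x :=
    fun x hx => (hasFDerivAt_inversion hx).hasFDerivWithinAt
  have key := integral_image_eq_integral_abs_det_fderiv_smul volume hms hf' hinj g
  rw [himg] at key
  have hres : (volume : Measure E).restrict s = volume :=
    Measure.restrict_eq_self_of_ae_mem (by
      filter_upwards [measure_eq_zero_iff_ae_notMem.mp (measure_singleton (0:E))] with x hx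
      exact hx)
  calc ∫ x : E, g x = ∫ x in s, g x := by rw [hres]
    _ = _ := by
        rw [key, hres]
        apply integral_congr_ae
        filter_upwards [measure_eq_zero_iff_ae_notMem.mp (measure_singleton (0:E))] with x hx
        have hdet : |(((r / dist x (0:E)) ^ 2 • ((ℝ ∙ (x - 0))ᗮ.reflection : E →L[ℝ] E)).det)|
            = ((r/‖x‖)^2)^d := by
          rw [ContinuousLinearMap.det]
          simp only [ContinuousLinearMap.coe_smul, LinearMap.det_smul]
          have h2 : ((((ℝ ∙ (x - 0))ᗮ.reflection : E →L[ℝ] E)) : E →ₗ[ℝ] E)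
              = ((ℝ ∙ (x - 0))ᗮ.reflection).toLinearEquiv := rfl
          rw [h2, Submodule.det_reflection]
          simp [abs_mul, abs_pow, dist_zero_right, finrank_euclideanSpace_fin, sq_abs]
        rw [hdet, hTx, smul_eq_mul]

lemma norm_Tx {r : ℝ} (hr : 0 < r) (x : E) (hx : x ≠ 0) :
    ‖((r/‖x‖)^2) • x‖ = r^2/‖x‖ := by
  have h0 : (0:ℝ) < ‖x‖ := norm_pos_iff.mpr hx
  rw [norm_smul, Real.norm_eq_abs, abs_of_nonneg (by positivity)]
  field_simp

lemma norm_sub_Tx {r : ℝ} (hr : 0 < r) (ξ x : E) (hξ : ‖ξ‖ = r) (hx : x ≠ 0) :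
    ‖ξ - ((r/‖x‖)^2) • x‖ = (r/‖x‖) * ‖ξ - x‖ := by
  have h0 : (0:ℝ) < ‖x‖ := norm_pos_iff.mpr hx
  have hsq : ‖ξ - ((r/‖x‖)^2) • x‖^2 = ((r/‖x‖) * ‖ξ - x‖)^2 := by
    rw [norm_sub_sq_real, mul_pow, norm_sub_sq_real, real_inner_smul_right, norm_smul,
      Real.norm_eq_abs, abs_of_nonneg (by positivity : (0:ℝ) ≤ (r/‖x‖)^2)]
    rw [hξ]
    field_simp
    ring
  have h1 : (0:ℝ) ≤ ‖ξ - ((r/‖x‖)^2) • x‖ := norm_nonneg _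
  have h2 : (0:ℝ) ≤ (r/‖x‖) * ‖ξ - x‖ := by positivity
  calc ‖ξ - ((r/‖x‖)^2) • x‖ = √(‖ξ - ((r/‖x‖)^2) • x‖^2) := (Real.sqrt_sq h1).symm
    _ = √(((r/‖x‖) * ‖ξ - x‖)^2) := by rw [hsq]
    _ = _ := Real.sqrt_sq h2

lemma Hker_T (γ : ℝ) {r : ℝ} (hr : 0 < r) (ξ x : E) (hξ : ‖ξ‖ = r) (hx : x ≠ 0) :
    ((r/‖x‖)^2)^d * Hker d γ (((r/‖x‖)^2) • x) ξ
      = (r/‖x‖)^(6*γ-(d:ℝ)-3) * Hker d γ x ξ := by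
  have hu : (0:ℝ) < ‖x‖ := norm_pos_iff.mpr hx
  have ht : (0:ℝ) < r/‖x‖ := by positivity
  rw [Hker, Hker, norm_Tx hr x hx, norm_sub_Tx hr ξ x hξ hx, hξ]
  have h1 : r^2/‖x‖ = (r/‖x‖)*((r/‖x‖)*‖x‖) := by field_simp
  rw [h1, Real.mul_rpow ht.le (by positivity), Real.mul_rpow ht.le hu.le,
    Real.mul_rpow ht.le (norm_nonneg _)]
  set a := 2*γ-(d:ℝ)-1 with ha
  set t := r/‖x‖ with htdef
  have hpow : (t^2)^d * (t^a*(t^a*t^a)) = t^(6*γ-(d:ℝ)-3) := by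
    rw [← pow_mul, ← Real.rpow_natCast t (2*d), ← Real.rpow_add ht, ← Real.rpow_add ht,
      ← Real.rpow_add ht]
    congr 1
    push_cast [ha]
    ring
  calc (t^2)^d * (cdg d γ * (t^a*(t^a*‖x‖^a)) * (t^a*‖ξ-x‖^a) * r^((d:ℝ)+2-4*γ))
      = ((t^2)^d * (t^a*(t^a*t^a))) * (cdg d γ * ‖x‖^a * ‖ξ-x‖^a * r^((d:ℝ)+2-4*γ)) := by
        ring
    _ = _ := by rw [hpow]

lemma main_cov (hd : 1 ≤ d) (γ : ℝ) (ξ : E) (hξ : ξ ≠ 0) (k : ℝ → ℝ) :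
    ∫ η : E, k (‖η‖/‖ξ‖) * Hker d γ η ξ
      = ∫ η : E, k (‖ξ‖/‖η‖) * ((‖ξ‖/‖η‖)^(6*γ-(d:ℝ)-3) * Hker d γ η ξ) := by
  have : Nonempty (Fin d) := ⟨⟨0, hd⟩⟩
  set r := ‖ξ‖ with hrd
  have hr : 0 < r := norm_pos_iff.mpr hξ
  rw [cov hd hr (fun η => k (‖η‖/r) * Hker d γ η ξ)]
  apply integral_congr_ae
  filter_upwards [measure_eq_zero_iff_ae_notMem.mp (measure_singleton (0:E))] with x hx
  have hu : (0:ℝ) < ‖x‖ := norm_pos_iff.mpr hx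
  have hnorm : ‖((r/‖x‖)^2) • x‖ / r = r / ‖x‖ := by
    rw [norm_Tx hr x hx]
    field_simp
  calc ((r/‖x‖)^2)^d * (k (‖((r/‖x‖)^2) • x‖/r) * Hker d γ (((r/‖x‖)^2) • x) ξ)
      = k (r/‖x‖) * (((r/‖x‖)^2)^d * Hker d γ (((r/‖x‖)^2) • x) ξ) := by
        rw [hnorm]; ring
    _ = k (r/‖x‖) * ((r/‖x‖)^(6*γ-(d:ℝ)-3) * Hker d γ x ξ) := by
        rw [Hker_T γ hr ξ x rfl hx]

end Stmt5Aux

open Stmt5Aux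

theorem stmt5 (d : ℕ) (hd : 1 ≤ d) (γ : ℝ)
    (hγ : γ ∈ Set.Ioo (1/2 : ℝ) (((d : ℝ) + 2)/4)) :
    γ = ((d : ℝ) + 3)/6 ↔
      ∀ ξ : EuclideanSpace ℝ (Fin d), ξ ≠ 0 →
        ∀ k : ℝ → ℝ, Continuous k → (∃ C : ℝ, ∀ x, |k x| ≤ C) →
          ∫ η, k (‖η‖ / ‖ξ‖) * Hker d γ η ξ = ∫ η, k (‖ξ‖ / ‖η‖) * Hker d γ η ξ := by
  constructor
  · intro hγeq ξ hξ k hk hkb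
    have hlam : 6*γ-(d:ℝ)-3 = 0 := by rw [hγeq]; ring
    rw [main_cov hd γ ξ hξ k]
    simp only [hlam, Real.rpow_zero, one_mul]
  · intro hsym
    have hdR : (1:ℝ) ≤ (d:ℝ) := by exact_mod_cast hd
    suffices h0 : 6*γ-(d:ℝ)-3 = 0 by linarith
    by_contra hL
    -- the distinguished unit vector
    set ξ₀ : EuclideanSpace ℝ (Fin d) := EuclideanSpace.single (⟨0, hd⟩ : Fin d) (1:ℝ) with hξ₀
    have hξn : ‖ξ₀‖ = 1 := by rw [hξ₀, EuclideanSpace.norm_single]; norm_num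
    have hξne : ξ₀ ≠ 0 := by
      intro h; rw [h, norm_zero] at hξn; norm_num at hξn
    -- the test function
    set k : ℝ → ℝ := fun t => max 0 (min (t - 4/3) (2 - t)) with hkdef
    have hkc : Continuous k := by
      apply continuous_const.max
      exact (continuous_id.sub continuous_const).min (continuous_const.sub continuous_id)
    have hknn : ∀ t, 0 ≤ k t := fun t => le_max_left _ _
    have hkb : ∀ t, |k t| ≤ 1 := by
      intro t
      rw [abs_of_nonneg (hknn t)]
      apply max_le (by norm_num)
      rcases le_total (t - 4/3) (2 - t) with h|h
      · rw [min_eq_left h]; linarith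
      · rw [min_eq_right h]; linarith
    have hks : ∀ t, k t ≠ 0 → 4/3 < t ∧ t < 2 := by
      intro t ht
      rcases lt_or_ge 0 (min (t - 4/3) (2 - t)) with h|h
      · exact ⟨by linarith [lt_of_lt_of_le h (min_le_left (t - 4/3) (2 - t))],
          by linarith [lt_of_lt_of_le h (min_le_right (t - 4/3) (2 - t))]⟩
      · exact absurd (max_eq_left h) ht
    have hkpos : ∀ t, 4/3 < t → t < 2 → 0 < k t := by
      intro t h1 h2
      exact lt_of_lt_of_le (lt_min (by linarith) (by linarith)) (le_max_right _ _)
    -- support facts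
    have hsupp' : ∀ η : EuclideanSpace ℝ (Fin d), k (1/‖η‖) ≠ 0 → 1/2 < ‖η‖ ∧ ‖η‖ < 3/4 := by
      intro η hne
      obtain ⟨h1, h2⟩ := hks _ hne
      have h0 : 0 < ‖η‖ := by
        rcases eq_or_lt_of_le (norm_nonneg η) with h|h
        · rw [← h] at h1; norm_num at h1
        · exact h
      refine ⟨?_, ?_⟩
      · have := (div_lt_iff₀ h0).mp h2; linarith
      · have := (lt_div_iff₀ h0).mp h1; linarith
    have hx43 : ∀ η : EuclideanSpace ℝ (Fin d), 1/2 < ‖η‖ → ‖η‖ < 3/4 →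
        4/3 < 1/‖η‖ ∧ 1/‖η‖ < 2 := by
      intro η h1 h2
      have h0 : 0 < ‖η‖ := by linarith
      exact ⟨(lt_div_iff₀ h0).mpr (by linarith), (div_lt_iff₀ h0).mpr (by linarith)⟩
    -- positivity of the constant
    have hcpos : 0 < cdg d γ := by
      have h1 : 0 < Real.Gamma (2*γ - 1) := Real.Gamma_pos_of_pos (by linarith [hγ.1])
      have h2 : 0 < Real.Gamma (((d : ℝ) + 1 - 2*γ)/2) := by
        apply Real.Gamma_pos_of_pos
        have := hγ.2; nlinarith
      have h3 : 0 < Real.Gamma (((d : ℝ) + 2 - 4*γ)/2) := by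
        apply Real.Gamma_pos_of_pos
        have := hγ.2; nlinarith
      have h4 : 0 < Real.Gamma ((2*γ - 1)/2) := Real.Gamma_pos_of_pos (by linarith [hγ.1])
      have h5 : (0:ℝ) < Real.pi ^ (-(d : ℝ)/2) := Real.rpow_pos_of_pos Real.pi_pos _
      rw [cdg]
      positivity
    have ha : 2*γ-(d:ℝ)-1 < 0 := by have := hγ.2; nlinarith
    -- Hker nonnegativity and positivity
    have hHnn : ∀ η, 0 ≤ Hker d γ η ξ₀ := by
      intro η
      rw [Hker]
      have := Real.rpow_nonneg (norm_nonneg η) (2*γ-(d:ℝ)-1)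
      positivity
    have hquarter : ∀ η : EuclideanSpace ℝ (Fin d), ‖η‖ < 3/4 → 1/4 ≤ ‖ξ₀ - η‖ := by
      intro η h2
      have := norm_sub_norm_le ξ₀ η
      rw [hξn] at this
      linarith
    have hHpos : ∀ η, 1/2 < ‖η‖ → ‖η‖ < 3/4 → 0 < Hker d γ η ξ₀ := by
      intro η h1 h2
      rw [Hker, hξn]
      have e1 : 0 < ‖η‖ := by linarith
      have e2 : (0:ℝ) < ‖ξ₀ - η‖ := by have := hquarter η h2; linarith
      have := Real.rpow_pos_of_pos e1 (2*γ-(d:ℝ)-1)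
      have := Real.rpow_pos_of_pos e2 (2*γ-(d:ℝ)-1)
      have : (0:ℝ) < (1:ℝ) ^ ((d:ℝ) + 2 - 4*γ) := Real.rpow_pos_of_pos one_pos _
      positivity
    -- measurability
    have hmH : Measurable fun η : EuclideanSpace ℝ (Fin d) => Hker d γ η ξ₀ := by
      unfold Hker; fun_prop
    have hmk : Measurable fun η : EuclideanSpace ℝ (Fin d) => k (1/‖η‖) := by
      apply hkc.measurable.comp; fun_prop
    have hmF : Measurable fun η : EuclideanSpace ℝ (Fin d) => k (1/‖η‖) * Hker d γ η ξ₀ :=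
      hmk.mul hmH
    have hmG : Measurable fun η : EuclideanSpace ℝ (Fin d) =>
        k (1/‖η‖) * ((1/‖η‖)^(6*γ-(d:ℝ)-3) * Hker d γ η ξ₀) := by
      apply hmk.mul
      apply Measurable.mul _ hmH
      fun_prop
    -- integrability helper
    have hint : ∀ (f : EuclideanSpace ℝ (Fin d) → ℝ) (M : ℝ), Measurable f →
        (∀ η, |f η| ≤ Set.indicator (Metric.closedBall 0 1) (fun _ => M) η) →
        Integrable f := by
      intro f M hm hb
      refine Integrable.mono'
        (g := Set.indicator (Metric.closedBall (0:EuclideanSpace ℝ (Fin d)) 1) (fun _ => M))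
        ?_ hm.aestronglyMeasurable ?_
      · exact (integrable_indicator_iff measurableSet_closedBall).mpr
          ((integrableOn_const_iff (C := M)).mpr (Or.inr measure_closedBall_lt_top))
      · exact Filter.Eventually.of_forall (fun x => by rw [Real.norm_eq_abs]; exact hb x)
    -- bounds
    set MH : ℝ := cdg d γ * (1/2:ℝ)^(2*γ-(d:ℝ)-1) * (1/4:ℝ)^(2*γ-(d:ℝ)-1) with hMH
    have hMHnn : 0 ≤ MH := by
      rw [hMH]
      have := Real.rpow_nonneg (by norm_num : (0:ℝ) ≤ 1/2) (2*γ-(d:ℝ)-1)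
      have := Real.rpow_nonneg (by norm_num : (0:ℝ) ≤ 1/4) (2*γ-(d:ℝ)-1)
      positivity
    have hHle : ∀ η, 1/2 < ‖η‖ → ‖η‖ < 3/4 → Hker d γ η ξ₀ ≤ MH := by
      intro η h1 h2
      rw [Hker, hξn, Real.one_rpow, mul_one, hMH]
      have hx : ‖η‖^(2*γ-(d:ℝ)-1) ≤ (1/2:ℝ)^(2*γ-(d:ℝ)-1) :=
        Real.rpow_le_rpow_of_nonpos (by norm_num) (by linarith) ha.le
      have hy : ‖ξ₀ - η‖^(2*γ-(d:ℝ)-1) ≤ (1/4:ℝ)^(2*γ-(d:ℝ)-1) :=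
        Real.rpow_le_rpow_of_nonpos (by norm_num) (hquarter η h2) ha.le
      apply mul_le_mul
      · exact mul_le_mul_of_nonneg_left hx hcpos.le
      · exact hy
      · exact Real.rpow_nonneg (norm_nonneg _) _
      · have := Real.rpow_nonneg (by norm_num : (0:ℝ) ≤ 1/2) (2*γ-(d:ℝ)-1)
        positivity
    have hboundF : ∀ η, |k (1/‖η‖) * Hker d γ η ξ₀| ≤
        Set.indicator (Metric.closedBall 0 1) (fun _ => MH) η := by
      intro η
      by_cases h : k (1/‖η‖) = 0
      · rw [h, zero_mul, abs_zero]
        exact Set.indicator_nonneg (fun _ _ => hMHnn) η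
      · obtain ⟨h1, h2⟩ := hsupp' η h
        have hmem : η ∈ Metric.closedBall (0:EuclideanSpace ℝ (Fin d)) 1 := by
          rw [Metric.mem_closedBall, dist_zero_right]; linarith
        rw [Set.indicator_of_mem hmem, abs_mul, abs_of_nonneg (hHnn η)]
        calc |k (1/‖η‖)| * Hker d γ η ξ₀ ≤ 1 * MH :=
              mul_le_mul (hkb _) (hHle η h1 h2) (hHnn η) zero_le_one
          _ = MH := one_mul MH
    have hrpow_bd : ∀ η : EuclideanSpace ℝ (Fin d), 1/2 < ‖η‖ → ‖η‖ < 3/4 →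
        (1/‖η‖)^(6*γ-(d:ℝ)-3) ≤ (2:ℝ)^|6*γ-(d:ℝ)-3| := by
      intro η h1 h2
      obtain ⟨e1, e2⟩ := hx43 η h1 h2
      calc (1/‖η‖)^(6*γ-(d:ℝ)-3) ≤ (1/‖η‖)^|6*γ-(d:ℝ)-3| :=
            Real.rpow_le_rpow_of_exponent_le (by linarith) (le_abs_self _)
        _ ≤ (2:ℝ)^|6*γ-(d:ℝ)-3| := Real.rpow_le_rpow (by linarith) e2.le (abs_nonneg _)
    have hboundG : ∀ η, |k (1/‖η‖) * ((1/‖η‖)^(6*γ-(d:ℝ)-3) * Hker d γ η ξ₀)| ≤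
        Set.indicator (Metric.closedBall 0 1) (fun _ => (2:ℝ)^|6*γ-(d:ℝ)-3| * MH) η := by
      intro η
      by_cases h : k (1/‖η‖) = 0
      · rw [h, zero_mul, abs_zero]
        refine Set.indicator_nonneg (fun _ _ => ?_) η
        have := Real.rpow_nonneg (by norm_num : (0:ℝ) ≤ 2) |6*γ-(d:ℝ)-3|
        positivity
      · obtain ⟨h1, h2⟩ := hsupp' η h
        have hmem : η ∈ Metric.closedBall (0:EuclideanSpace ℝ (Fin d)) 1 := by
          rw [Metric.mem_closedBall, dist_zero_right]; linarith
        have hprodnn : 0 ≤ (1/‖η‖)^(6*γ-(d:ℝ)-3) * Hker d γ η ξ₀ :=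
          mul_nonneg (Real.rpow_nonneg (by positivity) _) (hHnn η)
        rw [Set.indicator_of_mem hmem, abs_mul, abs_of_nonneg hprodnn]
        calc |k (1/‖η‖)| * ((1/‖η‖)^(6*γ-(d:ℝ)-3) * Hker d γ η ξ₀)
            ≤ 1 * ((2:ℝ)^|6*γ-(d:ℝ)-3| * MH) := by
              apply mul_le_mul (hkb _) _ hprodnn zero_le_one
              exact mul_le_mul (hrpow_bd η h1 h2) (hHle η h1 h2) (hHnn η)
                (Real.rpow_nonneg (by norm_num) _)
          _ = (2:ℝ)^|6*γ-(d:ℝ)-3| * MH := one_mul _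
    have hFint : Integrable (fun η : EuclideanSpace ℝ (Fin d) =>
        k (1/‖η‖) * Hker d γ η ξ₀) := hint _ MH hmF hboundF
    have hGint : Integrable (fun η : EuclideanSpace ℝ (Fin d) =>
        k (1/‖η‖) * ((1/‖η‖)^(6*γ-(d:ℝ)-3) * Hker d γ η ξ₀)) :=
      hint _ ((2:ℝ)^|6*γ-(d:ℝ)-3| * MH) hmG hboundG
    -- the two integral identities
    have hmc := main_cov hd γ ξ₀ hξne k
    have hsy := hsym ξ₀ hξne k hkc ⟨1, hkb⟩
    simp only [hξn, div_one] at hmc hsy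
    have combined : ∫ η, k (1/‖η‖) * ((1/‖η‖)^(6*γ-(d:ℝ)-3) * Hker d γ η ξ₀)
        = ∫ η, k (1/‖η‖) * Hker d γ η ξ₀ := hmc.symm.trans hsy
    -- the annulus
    set A : Set (EuclideanSpace ℝ (Fin d)) := {η | 1/2 < ‖η‖ ∧ ‖η‖ < 3/4} with hA
    have hAopen : IsOpen A := by
      have : A = (fun η : EuclideanSpace ℝ (Fin d) => ‖η‖) ⁻¹' (Set.Ioo (1/2 : ℝ) (3/4)) := rfl
      rw [this]
      exact isOpen_Ioo.preimage continuous_norm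
    have hAne : A.Nonempty := by
      refine ⟨(3/5 : ℝ) • ξ₀, ?_⟩
      have : ‖(3/5 : ℝ) • ξ₀‖ = 3/5 := by
        rw [norm_smul, hξn, Real.norm_eq_abs]; norm_num
      constructor <;> rw [this] <;> norm_num
    have hApos : 0 < volume A := hAopen.measure_pos volume hAne
    -- generic contradiction principle
    have key : ∀ F G : EuclideanSpace ℝ (Fin d) → ℝ, Integrable F → Integrable G →
        (∫ x, F x) = (∫ x, G x) → (∀ η, F η ≤ G η) → (∀ η ∈ A, F η < G η) → False := by
      intro F G hF hG heq hle hlt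
      have hD : Integrable (fun η => G η - F η) := hG.sub hF
      have hDnn : 0 ≤ fun η => G η - F η := fun η => sub_nonneg.mpr (hle η)
      have hzero : ∫ η, (G η - F η) = 0 := by
        rw [integral_sub hG hF, heq, sub_self]
      have hsuppA : A ⊆ Function.support (fun η => G η - F η) :=
        fun η hη => sub_ne_zero.mpr (hlt η hη).ne'
      have := (integral_pos_iff_support_of_nonneg hDnn hD).mpr
        (lt_of_lt_of_le hApos (measure_mono hsuppA))
      rw [hzero] at this
      exact lt_irrefl 0 this
    rcases lt_or_gt_of_ne hL with hneg|hpos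
    · -- Λ < 0 : G < F on the support
      refine key _ _ hGint hFint combined (fun η => ?_) (fun η hη => ?_)
      · by_cases h : k (1/‖η‖) = 0
        · rw [h, zero_mul, zero_mul]
        · obtain ⟨h1, h2⟩ := hsupp' η h
          obtain ⟨e1, e2⟩ := hx43 η h1 h2
          have hle1 : (1/‖η‖)^(6*γ-(d:ℝ)-3) ≤ 1 :=
            Real.rpow_le_one_of_one_le_of_nonpos (by linarith) hneg.le
          apply mul_le_mul_of_nonneg_left _ (hknn _)
          calc (1/‖η‖)^(6*γ-(d:ℝ)-3) * Hker d γ η ξ₀ ≤ 1 * Hker d γ η ξ₀ :=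
                mul_le_mul_of_nonneg_right hle1 (hHnn η)
            _ = Hker d γ η ξ₀ := one_mul _
      · obtain ⟨h1, h2⟩ := hη
        obtain ⟨e1, e2⟩ := hx43 η h1 h2
        have hklt : 0 < k (1/‖η‖) := hkpos _ e1 e2
        have hlt1 : (1/‖η‖)^(6*γ-(d:ℝ)-3) < 1 := by
          apply Real.rpow_lt_one_of_one_lt_of_neg (by linarith) hneg
        apply mul_lt_mul_of_pos_left _ hklt
        calc (1/‖η‖)^(6*γ-(d:ℝ)-3) * Hker d γ η ξ₀ < 1 * Hker d γ η ξ₀ :=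
              mul_lt_mul_of_pos_right hlt1 (hHpos η h1 h2)
          _ = Hker d γ η ξ₀ := one_mul _
    · -- Λ > 0 : F < G on the support
      refine key _ _ hFint hGint combined.symm (fun η => ?_) (fun η hη => ?_)
      · by_cases h : k (1/‖η‖) = 0
        · rw [h, zero_mul, zero_mul]
        · obtain ⟨h1, h2⟩ := hsupp' η h
          obtain ⟨e1, e2⟩ := hx43 η h1 h2
          have hge1 : 1 ≤ (1/‖η‖)^(6*γ-(d:ℝ)-3) := by
            apply Real.one_le_rpow (by linarith) hpos.le
          apply mul_le_mul_of_nonneg_left _ (hknn _)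
          calc Hker d γ η ξ₀ = 1 * Hker d γ η ξ₀ := (one_mul _).symm
            _ ≤ (1/‖η‖)^(6*γ-(d:ℝ)-3) * Hker d γ η ξ₀ :=
                mul_le_mul_of_nonneg_right hge1 (hHnn η)
      · obtain ⟨h1, h2⟩ := hη
        obtain ⟨e1, e2⟩ := hx43 η h1 h2
        have hklt : 0 < k (1/‖η‖) := hkpos _ e1 e2
        have hgt1 : 1 < (1/‖η‖)^(6*γ-(d:ℝ)-3) :=
          (Real.one_lt_rpow_iff_of_pos (by linarith)).mpr (Or.inl ⟨by linarith, hpos⟩)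
        apply mul_lt_mul_of_pos_left _ hklt
        calc Hker d γ η ξ₀ = 1 * Hker d γ η ξ₀ := (one_mul _).symm
          _ < (1/‖η‖)^(6*γ-(d:ℝ)-3) * Hker d γ η ξ₀ :=
              mul_lt_mul_of_pos_right hgt1 (hHpos η h1 h2)
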